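/- Let V be a finite-dimensional real inner product space and R : V →ₗ[ℝ] V a bijective linear map that is skew-adjoint with respect to the inner product: ⟪R u, v⟫ = −⟪u, R v⟫ for all u, v. Then there exists an odd polynomial P ∈ ℝ[X] (all coefficients in even degree vanish) such that J := P(R) satisfies: (i) J∘J = −id; (ii) J is orthogonal, ⟪J u, J v⟫ = ⟪u, v⟫ for all u, v; (iii) the operator S := −R∘J is self-adjoint and positive definite; and (iv) R = S∘J. In other words, the orthogonal factor of the polar decomposition of R is an odd real polynomial in R and is a complex structure on V. -/

import Mathlib

open RealInnerProductSpace Polynomial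

/-- **Polar decomposition of a bijective skew-adjoint operator via an odd polynomial.**
If `R` is a bijective skew-adjoint endomorphism of a finite-dimensional real inner product
space, then there is an odd real polynomial `P` such that `J := P(R)` satisfies `J ∘ J = −id`,
`J` is orthogonal, `S := −R ∘ J` is self-adjoint and positive definite, and `R = S ∘ J`. -/
theorem polar_decomposition_skew_adjoint
    {V : Type*} [NormedAddCommGroup V] [InnerProductSpace ℝ V] [FiniteDimensional ℝ V]
    (R : V →ₗ[ℝ] V) (hbij : Function.Bijective R)
    (hskew : ∀ u v : V, ⟪R u, v⟫ = -⟪u, R v⟫) :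
    ∃ P : ℝ[X], (∀ n : ℕ, Even n → P.coeff n = 0) ∧
      (aeval R P) ∘ₗ (aeval R P) = -LinearMap.id ∧
      (∀ u v : V, ⟪aeval R P u, aeval R P v⟫ = ⟪u, v⟫) ∧
      (∀ u v : V, ⟪(-(R ∘ₗ aeval R P)) u, v⟫ = ⟪u, (-(R ∘ₗ aeval R P)) v⟫) ∧
      (∀ u : V, u ≠ 0 → 0 < ⟪(-(R ∘ₗ aeval R P)) u, u⟫) ∧
      R = (-(R ∘ₗ aeval R P)) ∘ₗ (aeval R P) := by
  classical
  set A : V →ₗ[ℝ] V := -(R ∘ₗ R) with hAdef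
  have hA : A.IsSymmetric := by
    intro u v
    simp only [hAdef, LinearMap.neg_apply, LinearMap.comp_apply, inner_neg_left, inner_neg_right]
    rw [hskew (R u) v, hskew u (R v), neg_neg]
  have hAinner : ∀ u : V, ⟪A u, u⟫ = ⟪R u, R u⟫ := by
    intro u
    simp only [hAdef, LinearMap.neg_apply, LinearMap.comp_apply, inner_neg_left]
    rw [hskew (R u) u, neg_neg]
  set n := Module.finrank ℝ V with hn'
  have hn : Module.finrank ℝ V = n := rfl
  set b := hA.eigenvectorBasis hn with hbdef
  set μ := hA.eigenvalues hn with hμdef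
  have hAb : ∀ i, A (b i) = μ i • b i := fun i => by
    have h := hA.apply_eigenvectorBasis hn i
    exact_mod_cast h
  have hμpos : ∀ i, 0 < μ i := by
    intro i
    have h1 : ⟪A (b i), b i⟫ = μ i := by
      rw [hAb i, real_inner_smul_left, real_inner_self_eq_norm_sq, b.orthonormal.1 i]
      simp
    have h2 : (0:ℝ) < ⟪R (b i), R (b i)⟫ := by
      rw [real_inner_self_eq_norm_sq]
      have : R (b i) ≠ 0 := fun h => (b.toBasis.ne_zero i) (by
        simpa [OrthonormalBasis.coe_toBasis] using hbij.1 (h.trans (map_zero R).symm))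
      exact pow_pos (norm_pos_iff.mpr this) 2
    rw [← h1, hAinner]; exact h2
  -- interpolation polynomial
  set Q : ℝ[X] := Lagrange.interpolate (Finset.image μ Finset.univ) id
      (fun x => (Real.sqrt x)⁻¹) with hQdef
  have hQeval : ∀ i, Q.eval (μ i) = (Real.sqrt (μ i))⁻¹ := by
    intro i
    have := Lagrange.eval_interpolate_at_node (fun x => (Real.sqrt x)⁻¹)
      (Set.injOn_id _) (Finset.mem_image_of_mem μ (Finset.mem_univ i))
    rw [hQdef]; simpa using this
  set B : V →ₗ[ℝ] V := aeval A Q with hBdef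
  have heig : ∀ (p : ℝ[X]) (i : Fin n), aeval A p (b i) = p.eval (μ i) • b i := by
    intro p i
    exact Module.End.aeval_apply_of_hasEigenvector (hA.hasEigenvector_eigenvectorBasis hn i) (p := p)
  have hBb : ∀ i, B (b i) = (Real.sqrt (μ i))⁻¹ • b i := by
    intro i; rw [hBdef, heig, hQeval]
  -- commutation
  have hCRA : Commute R A := by
    rw [hAdef]
    exact (((Commute.refl R).mul_right (Commute.refl R))).neg_right
  have hCaev : ∀ (T : V →ₗ[ℝ] V), Commute T A → ∀ p : ℝ[X], Commute T (aeval A p) := by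
    intro T hT p
    induction p using Polynomial.induction_on' with
    | add f g hf hg => rw [map_add]; exact hf.add_right hg
    | monomial m a =>
        rw [aeval_monomial]
        exact Commute.mul_right ((Algebra.commutes a T).symm) (hT.pow_right m)
  have hCRB : Commute R B := hCaev R hCRA Q
  have hCAB : Commute A B := hCaev A (Commute.refl A) Q
  -- symmetry of B
  have hBsym : B.IsSymmetric := by
    intro u v
    rw [hBdef, Polynomial.aeval_eq_sum_range]
    simp only [LinearMap.sum_apply, LinearMap.smul_apply, inner_sum, sum_inner,
      real_inner_smul_left, real_inner_smul_right]
    exact Finset.sum_congr rfl fun i _ => by rw [hA.pow i u v]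
  have hcRB : ∀ w, R (B w) = B (R w) := fun w => LinearMap.congr_fun hCRB.eq w
  have hcAB : ∀ w, A (B w) = B (A w) := fun w => LinearMap.congr_fun hCAB.eq w
  have hμsqrt : ∀ i, Real.sqrt (μ i) ≠ 0 := fun i => (Real.sqrt_pos.mpr (hμpos i)).ne'
  -- the key diagonal identity  A ∘ B ∘ B = id
  have hABB : A ∘ₗ (B ∘ₗ B) = LinearMap.id := by
    apply b.toBasis.ext
    intro i
    simp only [OrthonormalBasis.coe_toBasis, LinearMap.comp_apply, hBb, map_smul, hAb,
      LinearMap.id_apply]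
    have hone : (Real.sqrt (μ i))⁻¹ * (Real.sqrt (μ i))⁻¹ * μ i = 1 := by
      field_simp [hμsqrt i]
      linarith [Real.mul_self_sqrt (hμpos i).le]
    rw [smul_smul, smul_smul, hone, one_smul]
  have hABB' : ∀ w, A (B (B w)) = w := fun w => LinearMap.congr_fun hABB w
  -- the odd polynomial
  set P : ℝ[X] := ∑ m ∈ Q.support, C (Q.coeff m * (-1)^m) * X^(2*m+1) with hPdef
  have hPodd : ∀ k : ℕ, Even k → P.coeff k = 0 := by
    intro k hk
    rw [hPdef, Polynomial.finset_sum_coeff]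
    refine Finset.sum_eq_zero fun m _ => ?_
    rw [Polynomial.coeff_C_mul, Polynomial.coeff_X_pow, if_neg, mul_zero]
    rintro rfl
    obtain ⟨t, ht⟩ := hk
    omega
  have hA2 : ∀ m : ℕ, A ^ m = ((-1:ℝ)^m) • R^(2*m) := by
    intro m
    have h : A = ((-1:ℝ)) • R^2 := by
      rw [hAdef, pow_two, Module.End.mul_eq_comp]; exact (neg_one_smul _ _).symm
    rw [h, _root_.smul_pow, ← pow_mul]
  have hBsum : B = ∑ m ∈ Q.support, (Q.coeff m * (-1)^m) • R^(2*m) := by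
    rw [hBdef]
    conv_lhs => rw [Q.as_sum_support]
    rw [map_sum]
    refine Finset.sum_congr rfl fun m _ => ?_
    rw [aeval_monomial, ← Algebra.smul_def, hA2 m, smul_smul]
  have hPR : aeval R P = R ∘ₗ B := by
    have h1 : aeval R P = ∑ m ∈ Q.support, (Q.coeff m * (-1)^m) • R^(2*m+1) := by
      rw [hPdef, map_sum]
      refine Finset.sum_congr rfl fun m _ => ?_
      rw [map_mul, aeval_C, map_pow, aeval_X, ← Algebra.smul_def]
    rw [h1, hBsum, ← Module.End.mul_eq_comp, Finset.mul_sum]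
    refine Finset.sum_congr rfl fun m _ => ?_
    rw [mul_smul_comm, ← pow_succ']
  -- J := R ∘ B ; the six conclusions
  have hJJ : (R ∘ₗ B) ∘ₗ (R ∘ₗ B) = -LinearMap.id := by
    ext w
    simp only [LinearMap.comp_apply, LinearMap.neg_apply, LinearMap.id_apply]
    rw [← hcRB (B w)]
    have hRR' : ∀ x, R (R x) = -(A x) := by
      intro x; rw [hAdef]; simp
    rw [hRR', hABB' w]
  have hcRA' : ∀ w, R (A w) = A (R w) := fun w => LinearMap.congr_fun hCRA.eq w
  have hJskew : ∀ u v : V, ⟪(R ∘ₗ B) u, v⟫ = -⟪u, (R ∘ₗ B) v⟫ := by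
    intro u v
    simp only [LinearMap.comp_apply]
    rw [hskew (B u) v, hBsym u (R v), ← hcRB v]
  have hSsym : ∀ u v : V, ⟪(A ∘ₗ B) u, v⟫ = ⟪u, (A ∘ₗ B) v⟫ := by
    intro u v
    simp only [LinearMap.comp_apply]
    rw [hA (B u) v, hBsym u (A v), ← hcAB v]
  have hS : -(R ∘ₗ (R ∘ₗ B)) = A ∘ₗ B := by
    rw [hAdef]; ext w; simp
  have hSb : ∀ i, (A ∘ₗ B) (b i) = Real.sqrt (μ i) • b i := by
    intro i
    simp only [LinearMap.comp_apply, hBb, map_smul, hAb, smul_smul]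
    congr 1
    field_simp [hμsqrt i]
    rw [Real.sq_sqrt (hμpos i).le]
  refine ⟨P, hPodd, ?_, ?_, ?_, ?_, ?_⟩
  · rw [hPR]; exact hJJ
  · intro u v
    rw [hPR]
    have h2 : (R ∘ₗ B) ((R ∘ₗ B) v) = -v := by
      simpa using LinearMap.congr_fun hJJ v
    rw [hJskew u ((R ∘ₗ B) v), h2, inner_neg_right, neg_neg]
  · intro u v
    rw [hPR, hS]
    exact hSsym u v
  · intro u hu
    rw [hPR, hS]
    have h1 : ⟪(A ∘ₗ B) u, u⟫ = ∑ i, Real.sqrt (μ i) * (b.repr u i * b.repr u i) := by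
      rw [← b.repr.inner_map_map ((A ∘ₗ B) u) u]
      simp only [PiLp.inner_apply, RCLike.inner_apply, starRingEnd_apply, star_trivial]
      refine Finset.sum_congr rfl fun i _ => ?_
      have h2 : b.repr ((A ∘ₗ B) u) i = Real.sqrt (μ i) * b.repr u i := by
        rw [OrthonormalBasis.repr_apply_apply, OrthonormalBasis.repr_apply_apply,
          ← hSsym (b i) u, hSb i, real_inner_smul_left]
      rw [h2]; ring
    rw [h1]
    have hne : ∃ i, b.repr u i ≠ 0 := by
      by_contra h; push_neg at h
      apply hu
      have hz : b.repr u = 0 := by ext i; exact h i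
      exact b.repr.map_eq_zero_iff.mp hz
    obtain ⟨i, hi⟩ := hne
    refine Finset.sum_pos' (fun j _ => ?_) ⟨i, Finset.mem_univ i, ?_⟩
    · exact mul_nonneg (Real.sqrt_nonneg _) (mul_self_nonneg _)
    · exact mul_pos (Real.sqrt_pos.mpr (hμpos i)) (mul_self_pos.mpr hi)
  · rw [hPR, hS]
    ext w
    simp only [LinearMap.comp_apply]
    rw [← hcRB (B w), ← hcRA' (B (B w)), hABB' w]
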